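/- Let N ≥ 2, K > 0, and γ ∈ (0, π/2). Let a : [0,∞) → ℝ^{N×N} be a family of symmetric matrices with nonnegative entries, and let c : [0,∞) → [0,∞) be locally integrable and such that for every t ≥ 0 and every w ∈ ℝ^N with ∑_i w_i = 0, ∑_{i,j=1}^N a_{ij}(t)·(w_i − w_j)² ≥ c(t)·∑_{i=1}^N w_i². Suppose θ : [0,∞) → ℝ^N is differentiable and satisfies the homogeneous Kuramoto system dθ_i/dt = (K/N)·∑_{j=1}^N a_{ij}(t)·sin(θ_j(t) − θ_i(t)), with ∑_{i=1}^N θ_i(0) = 0 and |θ_i(0) − θ_j(0)| ≤ γ for all i, j. Then for all t ≥ 0: ∑_{i=1}^N θ_i(t)² ≤ (∑_{i=1}^N θ_i(0)²)·exp(−(K·cos γ / N)·∫_0^t c(s) ds). -/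

import Mathlib

open Real MeasureTheory intervalIntegral

section KuramotoHelpers

open Set Filter


lemma sin_ge_mul_cos {x : ℝ} (hx0 : 0 ≤ x) (hxpi : x ≤ Real.pi) :
    x * Real.cos x ≤ Real.sin x := by
  have key : ∀ y ∈ Icc (0:ℝ) Real.pi, 0 ≤ Real.sin y - y * Real.cos y := by
    have hmono : MonotoneOn (fun y => Real.sin y - y * Real.cos y) (Icc 0 Real.pi) := by
      apply monotoneOn_of_deriv_nonneg (convex_Icc _ _)
      · exact (Real.continuous_sin.sub (continuous_id.mul Real.continuous_cos)).continuousOn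
      · intro y hy
        exact ((Real.differentiable_sin y).sub
          ((differentiable_id y).mul (Real.differentiable_cos y))).differentiableWithinAt
      · intro y hy
        rw [interior_Icc] at hy
        have hd : HasDerivAt (fun y => Real.sin y - y * Real.cos y) (y * Real.sin y) y := by
          have := (Real.hasDerivAt_sin y).fun_sub ((hasDerivAt_id' y).fun_mul (Real.hasDerivAt_cos y))
          refine this.congr_deriv ?_
          simp [id_eq]
          try ring
        rw [hd.deriv]
        exact mul_nonneg hy.1.le (Real.sin_nonneg_of_nonneg_of_le_pi hy.1.le hy.2.le)
    intro y hy
    have := hmono (left_mem_Icc.2 Real.pi_pos.le) hy hy.1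
    simpa using this
  have := key x ⟨hx0, hxpi⟩
  linarith

lemma mul_sin_ge {γ x : ℝ} (hγ0 : 0 < γ) (hγ : γ < Real.pi / 2) (hx : |x| ≤ γ) :
    Real.cos γ * x ^ 2 ≤ x * Real.sin x := by
  have hγpi : γ ≤ Real.pi := by linarith [Real.pi_pos]
  have main : ∀ y : ℝ, 0 ≤ y → y ≤ γ → Real.cos γ * y ^ 2 ≤ y * Real.sin y := by
    intro y hy0 hyγ
    have h1 : y * Real.cos y ≤ Real.sin y := sin_ge_mul_cos hy0 (hyγ.trans hγpi)
    have h2 : Real.cos γ ≤ Real.cos y :=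
      Real.cos_le_cos_of_nonneg_of_le_pi hy0 hγpi hyγ
    nlinarith
  rcases abs_le.1 hx with ⟨hl, hr⟩
  rcases le_or_gt 0 x with hx0 | hx0
  · exact main x hx0 hr
  · have := main (-x) (by linarith) (by linarith)
    have hs : Real.sin (-x) = - Real.sin x := Real.sin_neg x
    rw [hs] at this
    nlinarith

lemma continuousOn_finset_sup' {ι : Type*} {s : Finset ι} (hs : s.Nonempty)
    {f : ι → ℝ → ℝ} {U : Set ℝ} (hf : ∀ i ∈ s, ContinuousOn (f i) U) :
    ContinuousOn (fun t => s.sup' hs (fun i => f i t)) U := by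
  induction hs using Finset.Nonempty.cons_induction with
  | singleton i => simpa using hf i (by simp)
  | cons i s hi hs ih =>
      have heq : (fun t => (Finset.cons i s hi).sup' (Finset.cons_nonempty hi) (fun j => f j t))
          = fun t => (f i t) ⊔ (s.sup' hs (fun j => f j t)) := by
        funext t; exact Finset.sup'_cons (f := fun j => f j t) hs
      rw [heq]
      exact (hf i (by simp)).sup (ih (fun j hj => hf j (Finset.mem_cons_of_mem hj)))


lemma gronwall_aux {u I : ℝ → ℝ} {lam : ℝ} (hlam : 0 < lam)
    (hI0 : I 0 = 0)
    (hImono : ∀ ⦃s t : ℝ⦄, 0 ≤ s → s ≤ t → I s ≤ I t)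
    (hIcont : ContinuousOn I (Set.Ici 0))
    (hupos : ∀ x : ℝ, 0 ≤ x → 0 ≤ u x)
    (hmain : ∀ s t : ℝ, 0 ≤ s → s ≤ t → u t * (1 + lam * (I t - I s)) ≤ u s) :
    ∀ t, 0 ≤ t → u t ≤ u 0 * Real.exp (-lam * I t) := by
  intro t ht
  have hu0 : ∀ x : ℝ, 0 ≤ x → u x ≤ u 0 := by
    intro x hx
    have h1 := hmain 0 x le_rfl hx
    have h2 := hImono le_rfl hx
    have h3 := hupos x hx
    nlinarith [mul_nonneg h3 (mul_nonneg hlam.le (by linarith : (0:ℝ) ≤ I x - I 0))]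
  suffices h : ∀ lam' : ℝ, lam' ∈ Set.Ioo 0 lam → u t * Real.exp (lam' * I t) ≤ u 0 by
    have key : ∀ lam' ∈ Set.Ioo (0:ℝ) lam, u t ≤ u 0 * Real.exp (-lam' * I t) := by
      intro lam' hl
      have h1 := h lam' hl
      have h2 : (0:ℝ) < Real.exp (lam' * I t) := Real.exp_pos _
      have heq : u t = u t * Real.exp (lam' * I t) * (Real.exp (lam' * I t))⁻¹ := by
        field_simp
      rw [neg_mul, Real.exp_neg, heq]
      exact mul_le_mul_of_nonneg_right h1 (by positivity)
    have tends : Tendsto (fun l : ℝ => u 0 * Real.exp (-l * I t)) (nhdsWithin lam (Set.Iio lam))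
        (nhds (u 0 * Real.exp (-lam * I t))) := by
      have : Continuous (fun l : ℝ => u 0 * Real.exp (-l * I t)) := by continuity
      exact (this.tendsto lam).mono_left nhdsWithin_le_nhds
    refine ge_of_tendsto tends ?_
    filter_upwards [Ioo_mem_nhdsLT_of_mem (⟨hlam, le_rfl⟩ : lam ∈ Set.Ioc 0 lam)] with l hl
    exact key l hl
  rintro lam' ⟨hl0, hll⟩
  set δ : ℝ := (lam - lam') / (lam * lam') with hδdef
  have hδ : 0 < δ := div_pos (by linarith) (mul_pos hlam hl0)
  -- one-step estimate
  have step : ∀ s t : ℝ, 0 ≤ s → s ≤ t → I t - I s ≤ δ →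
      u t * Real.exp (lam' * (I t - I s)) ≤ u s := by
    intro s t hs hst hΔδ
    set Δ := I t - I s with hΔdef
    have hΔ0 : 0 ≤ Δ := by
      have := hImono hs hst; simp [hΔdef]; linarith
    have h1 : lam' * Δ < 1 := by
      have h2 : lam' * Δ ≤ lam' * δ := by nlinarith
      have h3 : lam' * δ = (lam - lam') / lam := by
        rw [hδdef]; field_simp
      rw [h3] at h2
      have h4 : (lam - lam') / lam < 1 := by
        rw [div_lt_one hlam]; linarith
      exact lt_of_le_of_lt h2 h4
    have hexp : Real.exp (lam' * Δ) ≤ 1 + lam * Δ := by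
      have ha : 1 - lam' * Δ ≤ Real.exp (-(lam' * Δ)) := by
        have := Real.add_one_le_exp (-(lam' * Δ)); linarith
      have hb : Real.exp (lam' * Δ) * (1 - lam' * Δ) ≤ 1 := by
        calc Real.exp (lam' * Δ) * (1 - lam' * Δ)
            ≤ Real.exp (lam' * Δ) * Real.exp (-(lam' * Δ)) := by
              apply mul_le_mul_of_nonneg_left ha (Real.exp_pos _).le
          _ = 1 := by rw [← Real.exp_add]; simp
      have hc : (1:ℝ) ≤ (1 + lam * Δ) * (1 - lam' * Δ) := by
        have hd : lam * lam' * Δ ≤ lam - lam' := by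
          have he : lam * lam' * Δ ≤ lam * lam' * δ :=
            mul_le_mul_of_nonneg_left hΔδ (mul_pos hlam hl0).le
          have hf : lam * lam' * δ = lam - lam' := by
            rw [hδdef]; field_simp
          linarith
        nlinarith
      have hpos : 0 < 1 - lam' * Δ := by linarith
      nlinarith [Real.exp_pos (lam' * Δ)]
    have humt : 0 ≤ u t := hupos t (le_trans hs hst)
    calc u t * Real.exp (lam' * Δ) ≤ u t * (1 + lam * Δ) :=
          mul_le_mul_of_nonneg_left hexp humt
      _ ≤ u s := hmain s t hs hst
  -- chain
  have chain : ∀ n : ℕ, ∀ s t : ℝ, 0 ≤ s → s ≤ t → I t - I s ≤ n * δ →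
      u t * Real.exp (lam' * (I t - I s)) ≤ u s := by
    intro n
    induction n with
    | zero =>
        intro s t hs hst hΔ
        have h0 : I t - I s = 0 := le_antisymm (by simpa using hΔ)
          (by have := hImono hs hst; linarith)
        have h1 := hmain s t hs hst
        rw [h0] at h1 ⊢
        simpa using (by simpa using h1)
    | succ n ih =>
        intro s t hs hst hΔ
        by_cases hcase : I t - I s ≤ n * δ
        · exact ih s t hs hst hcase
        push_neg at hcase
        have hmem : I s + n * δ ∈ Set.Icc (I s) (I t) := by
          constructor
          · nlinarith [hδ.le, Nat.cast_nonneg (α := ℝ) n]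
          · linarith
        obtain ⟨r, hr, hIr⟩ := intermediate_value_Icc hst
          (hIcont.mono (fun x hx => le_trans hs hx.1)) hmem
        have hr0 : 0 ≤ r := le_trans hs hr.1
        have h1 : u t * Real.exp (lam' * (I t - I r)) ≤ u r := by
          apply step r t hr0 hr.2
          rw [hIr]
          push_cast at hΔ ⊢
          linarith
        have h2 : u r * Real.exp (lam' * (I r - I s)) ≤ u s := by
          apply ih s r hs hr.1
          rw [hIr]; simp
        have hsplit : lam' * (I t - I s) = lam' * (I t - I r) + lam' * (I r - I s) := by ring
        rw [hsplit, Real.exp_add, ← mul_assoc]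
        calc u t * Real.exp (lam' * (I t - I r)) * Real.exp (lam' * (I r - I s))
            ≤ u r * Real.exp (lam' * (I r - I s)) := by
              apply mul_le_mul_of_nonneg_right h1 (Real.exp_pos _).le
          _ ≤ u s := h2
  obtain ⟨n, hn⟩ := exists_nat_ge (I t / δ)
  have hIt : I t - I 0 ≤ n * δ := by
    rw [hI0, sub_zero]
    rw [div_le_iff₀ hδ] at hn
    linarith
  have := chain n 0 t le_rfl ht hIt
  rwa [hI0, sub_zero] at this


lemma continuousAt_finset_sup' {ι : Type*} {s : Finset ι} (hs : s.Nonempty)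
    {f : ι → ℝ → ℝ} {x : ℝ} (hf : ∀ i ∈ s, ContinuousAt (f i) x) :
    ContinuousAt (fun t => s.sup' hs (fun i => f i t)) x := by
  induction hs using Finset.Nonempty.cons_induction with
  | singleton i => simpa using hf i (by simp)
  | cons i s hi hs ih =>
      have heq : (fun t => (Finset.cons i s hi).sup' (Finset.cons_nonempty hi) (fun j => f j t))
          = fun t => (f i t) ⊔ (s.sup' hs (fun j => f j t)) := by
        funext t; exact Finset.sup'_cons (f := fun j => f j t) hs
      rw [heq]
      exact (hf i (by simp)).sup (ih (fun j hj => hf j (Finset.mem_cons_of_mem hj)))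

lemma sum_antisymm {N : ℕ} (F : Fin N → Fin N → ℝ) (h : ∀ i j, F j i = - F i j) :
    ∑ i : Fin N, ∑ j : Fin N, F i j = 0 := by
  have h1 : ∑ i : Fin N, ∑ j : Fin N, F i j = ∑ i : Fin N, ∑ j : Fin N, F j i :=
    Finset.sum_comm
  have h2 : ∑ i : Fin N, ∑ j : Fin N, F j i = ∑ i : Fin N, ∑ j : Fin N, -F i j := by
    apply Finset.sum_congr rfl; intro i _
    apply Finset.sum_congr rfl; intro j _
    exact h i j
  have h3 : ∑ i : Fin N, ∑ j : Fin N, -F i j = - ∑ i : Fin N, ∑ j : Fin N, F i j := by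
    simp
  linarith

end KuramotoHelpers

/-- Deterministic exponential-decay estimate for the homogeneous Kuramoto
system started in the phase-cohesive set Δ(γ), γ < π/2, with mean zero,
given a time-dependent spectral gap c(t) for the network. -/
theorem kuramoto_exponential_decay
    (N : ℕ) (hN : 2 ≤ N) (K : ℝ) (hK : 0 < K)
    (γ : ℝ) (hγ0 : 0 < γ) (hγ : γ < Real.pi / 2)
    (a : ℝ → Fin N → Fin N → ℝ)
    (hsym : ∀ t : ℝ, 0 ≤ t → ∀ i j : Fin N, a t i j = a t j i)
    (ha : ∀ t : ℝ, 0 ≤ t → ∀ i j : Fin N, 0 ≤ a t i j)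
    (c : ℝ → ℝ)
    (hc0 : ∀ t : ℝ, 0 ≤ t → 0 ≤ c t)
    (hcInt : ∀ t : ℝ, 0 ≤ t → IntervalIntegrable c volume 0 t)
    (hgap : ∀ t : ℝ, 0 ≤ t → ∀ w : Fin N → ℝ, (∑ i : Fin N, w i) = 0 →
      c t * ∑ i : Fin N, (w i) ^ 2
        ≤ ∑ i : Fin N, ∑ j : Fin N, a t i j * (w i - w j) ^ 2)
    (θ : ℝ → Fin N → ℝ)
    (hode : ∀ t : ℝ, 0 ≤ t → ∀ i : Fin N,
      HasDerivAt (fun s => θ s i)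
        ((K / N) * ∑ j : Fin N, a t i j * Real.sin (θ t j - θ t i)) t)
    (hmean0 : ∑ i : Fin N, θ 0 i = 0)
    (hinit : ∀ i j : Fin N, |θ 0 i - θ 0 j| ≤ γ) :
    ∀ t : ℝ, 0 ≤ t →
      ∑ i : Fin N, (θ t i) ^ 2
        ≤ (∑ i : Fin N, (θ 0 i) ^ 2)
            * Real.exp (-(K * Real.cos γ / N) * ∫ s in (0:ℝ)..t, c s) := by
  have hNR : (0:ℝ) < (N:ℝ) := by exact_mod_cast (by omega : 0 < N)
  have hπ := Real.pi_pos
  have hcos : 0 < Real.cos γ := Real.cos_pos_of_mem_Ioo ⟨by linarith, hγ⟩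
  set lam : ℝ := K * Real.cos γ / N with hlamdef
  have hlam : 0 < lam := div_pos (mul_pos hK hcos) hNR
  -- mean conservation
  have hSder : ∀ y : ℝ, 0 ≤ y → HasDerivAt (fun s => ∑ i : Fin N, θ s i) 0 y := by
    intro y hy
    have h1 : HasDerivAt (fun s => ∑ i : Fin N, θ s i)
        (∑ i : Fin N, (K / N) * ∑ j : Fin N, a y i j * Real.sin (θ y j - θ y i)) y :=
      HasDerivAt.fun_sum (fun i _ => hode y hy i)
    have h2 : (∑ i : Fin N, (K / N) * ∑ j : Fin N, a y i j * Real.sin (θ y j - θ y i)) = 0 := by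
      rw [← Finset.mul_sum]
      have h3 : ∑ i : Fin N, ∑ j : Fin N, a y i j * Real.sin (θ y j - θ y i) = 0 := by
        apply sum_antisymm
        intro i j
        rw [hsym y hy j i, show θ y i - θ y j = -(θ y j - θ y i) by ring, Real.sin_neg]
        ring
      rw [h3]; ring
    rwa [h2] at h1
  have hmean : ∀ x : ℝ, 0 ≤ x → ∑ i : Fin N, θ x i = 0 := by
    intro x hx
    have hc' : ContinuousOn (fun s => ∑ i : Fin N, θ s i) (Set.Icc 0 x) :=
      fun y hy => ((hSder y hy.1).continuousAt).continuousWithinAt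
    have := constant_of_has_deriv_right_zero hc'
      (fun y hy => (hSder y hy.1).hasDerivWithinAt) x ⟨hx, le_rfl⟩
    rw [this, hmean0]
  -- the max of pairwise differences
  have hne : (Finset.univ : Finset (Fin N × Fin N)).Nonempty := by
    have : Nonempty (Fin N) := ⟨⟨0, by omega⟩⟩
    exact Finset.univ_nonempty
  set M : ℝ → ℝ := fun s =>
    Finset.univ.sup' hne (fun p : Fin N × Fin N => θ s p.1 - θ s p.2) with hMdef
  have hMcont : ∀ x : ℝ, 0 ≤ x → ContinuousAt M x := by
    intro x hx
    exact continuousAt_finset_sup' hne (fun p _ =>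
      ((hode x hx p.1).continuousAt).sub ((hode x hx p.2).continuousAt))
  have hM0 : M 0 ≤ γ := by
    apply Finset.sup'_le
    intro p _
    exact le_trans (le_abs_self _) (hinit p.1 p.2)
  have hMnonneg : ∀ x : ℝ, 0 ≤ M x := by
    intro x
    have : θ x (⟨0, by omega⟩ : Fin N) - θ x (⟨0, by omega⟩ : Fin N) = 0 := by ring
    calc (0:ℝ) = θ x (⟨0, by omega⟩ : Fin N) - θ x (⟨0, by omega⟩ : Fin N) := by ring
      _ ≤ M x := Finset.le_sup' (f := fun p : Fin N × Fin N => θ x p.1 - θ x p.2) (Finset.mem_univ ((⟨0, by omega⟩ : Fin N), (⟨0, by omega⟩ : Fin N)))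
  -- Dini-type slope bound wherever M x < π/2
  have hslope : ∀ x : ℝ, 0 ≤ x → M x < Real.pi / 2 →
      ∀ r : ℝ, 0 < r → ∃ᶠ z in nhdsWithin x (Set.Ioi x), slope M x z < r := by
    intro x hx hMx r hr
    apply Filter.Eventually.frequently
    have hev : ∀ p : Fin N × Fin N,
        ∀ᶠ z in nhdsWithin x (Set.Ioi x), θ z p.1 - θ z p.2 < M x + r * (z - x) := by
      intro p
      by_cases hp : θ x p.1 - θ x p.2 = M x
      · -- argmax pair: derivative is nonpositive
        set i := p.1
        set j := p.2
        have hmax : ∀ k : Fin N, θ x k ≤ θ x i := by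
          intro k
          have h1 : θ x k - θ x j ≤ M x := Finset.le_sup' (f := fun p : Fin N × Fin N => θ x p.1 - θ x p.2) (Finset.mem_univ (k, j))
          rw [← hp] at h1; linarith
        have hmin : ∀ k : Fin N, θ x j ≤ θ x k := by
          intro k
          have h1 : θ x i - θ x k ≤ M x := Finset.le_sup' (f := fun p : Fin N × Fin N => θ x p.1 - θ x p.2) (Finset.mem_univ (i, k))
          rw [← hp] at h1; linarith
        have hd : HasDerivAt (fun s => θ s i - θ s j)
            (((K / N) * ∑ k : Fin N, a x i k * Real.sin (θ x k - θ x i))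
              - ((K / N) * ∑ k : Fin N, a x j k * Real.sin (θ x k - θ x j))) x :=
          (hode x hx i).sub (hode x hx j)
        have hdle : (((K / N) * ∑ k : Fin N, a x i k * Real.sin (θ x k - θ x i))
              - ((K / N) * ∑ k : Fin N, a x j k * Real.sin (θ x k - θ x j))) ≤ 0 := by
          have hKN : 0 ≤ K / N := le_of_lt (div_pos hK hNR)
          have hs1 : ∑ k : Fin N, a x i k * Real.sin (θ x k - θ x i) ≤ 0 := by
            apply Finset.sum_nonpos
            intro k _
            apply mul_nonpos_of_nonneg_of_nonpos (ha x hx i k)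
            have h1 : θ x k - θ x i ≤ 0 := by linarith [hmax k]
            have h2 : -Real.pi ≤ θ x k - θ x i := by
              have h3 : θ x i - θ x k ≤ M x := Finset.le_sup' (f := fun p : Fin N × Fin N => θ x p.1 - θ x p.2) (Finset.mem_univ (i, k))
              linarith
            have := Real.sin_nonneg_of_nonneg_of_le_pi
              (x := -(θ x k - θ x i)) (by linarith) (by linarith)
            rw [Real.sin_neg] at this
            linarith
          have hs2 : 0 ≤ ∑ k : Fin N, a x j k * Real.sin (θ x k - θ x j) := by
            apply Finset.sum_nonneg
            intro k _
            apply mul_nonneg (ha x hx j k)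
            have h1 : 0 ≤ θ x k - θ x j := by linarith [hmin k]
            have h2 : θ x k - θ x j ≤ Real.pi := by
              have h3 : θ x k - θ x j ≤ M x := Finset.le_sup' (f := fun p : Fin N × Fin N => θ x p.1 - θ x p.2) (Finset.mem_univ (k, j))
              linarith
            exact Real.sin_nonneg_of_nonneg_of_le_pi h1 h2
          nlinarith
        have htend : Filter.Tendsto (slope (fun s => θ s i - θ s j) x)
            (nhdsWithin x {x}ᶜ) (nhds _) := hasDerivAt_iff_tendsto_slope.1 hd
        have htend' : Filter.Tendsto (slope (fun s => θ s i - θ s j) x)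
            (nhdsWithin x (Set.Ioi x)) (nhds _) :=
          htend.mono_left (nhdsWithin_mono x (fun z hz => ne_of_gt hz))
        have hevs : ∀ᶠ z in nhdsWithin x (Set.Ioi x),
            slope (fun s => θ s i - θ s j) x z < r :=
          htend' (Iio_mem_nhds (lt_of_le_of_lt hdle hr))
        filter_upwards [hevs, self_mem_nhdsWithin] with z hz hzx
        have hzx' : 0 < z - x := sub_pos.2 hzx
        rw [slope_def_field, div_lt_iff₀ hzx'] at hz
        have hpeq : θ x i - θ x j = M x := hp
        linarith
      · -- non-argmax pair: strict inequality persists by continuity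
        have hlt : θ x p.1 - θ x p.2 < M x :=
          lt_of_le_of_ne (Finset.le_sup' (f := fun p : Fin N × Fin N => θ x p.1 - θ x p.2) (Finset.mem_univ p)) hp
        have hcont : ContinuousAt (fun s => θ s p.1 - θ s p.2) x :=
          ((hode x hx p.1).continuousAt).sub ((hode x hx p.2).continuousAt)
        have hev2 : ∀ᶠ z in nhds x, θ z p.1 - θ z p.2 < M x :=
          hcont.eventually (eventually_lt_nhds hlt)
        filter_upwards [nhdsWithin_le_nhds hev2, self_mem_nhdsWithin] with z hz hzx
        have : 0 < r * (z - x) := mul_pos hr (sub_pos.2 hzx)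
        linarith
    have hall : ∀ᶠ z in nhdsWithin x (Set.Ioi x),
        ∀ p ∈ (Finset.univ : Finset (Fin N × Fin N)), θ z p.1 - θ z p.2 < M x + r * (z - x) := by
      rw [Filter.eventually_all_finset]
      intro p _
      exact hev p
    filter_upwards [hall, self_mem_nhdsWithin] with z hz hzx
    have hzx' : 0 < z - x := sub_pos.2 hzx
    have hMz : M z < M x + r * (z - x) := by
      rw [hMdef]
      exact (Finset.sup'_lt_iff hne).2 (fun p hpm => hz p hpm)
    rw [slope_def_field, div_lt_iff₀ hzx']
    linarith
  -- cohesiveness is preserved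
  have hMle : ∀ x : ℝ, 0 ≤ x → M x ≤ γ := by
    by_contra hcon
    push_neg at hcon
    obtain ⟨t₁, ht₁, hMt₁⟩ := hcon
    set S : Set ℝ := {s : ℝ | 0 ≤ s ∧ γ < M s} with hSdef
    have hSne : S.Nonempty := ⟨t₁, ht₁, hMt₁⟩
    have hSbd : BddBelow S := ⟨0, fun s hs => hs.1⟩
    set T := sInf S with hTdef
    have hT0 : 0 ≤ T := le_csInf hSne (fun s hs => hs.1)
    have hbefore : ∀ s : ℝ, 0 ≤ s → s < T → M s ≤ γ := by
      intro s hs hsT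
      by_contra hgt
      push_neg at hgt
      exact absurd (csInf_le hSbd ⟨hs, hgt⟩) (not_le.2 hsT)
    have hMT : M T ≤ γ := by
      by_contra hgt
      push_neg at hgt
      rcases eq_or_lt_of_le hT0 with hTeq | hTpos
      · rw [hTeq] at hM0; linarith
      · have hev := (hMcont T hT0).eventually (eventually_gt_nhds hgt)
        obtain ⟨ε, hε, hball⟩ := Metric.eventually_nhds_iff.1 hev
        set s := max 0 (T - ε / 2) with hsdef
        have hs0 : 0 ≤ s := le_max_left _ _
        have hsT : s < T := max_lt hTpos (by linarith)
        have hdist : dist s T < ε := by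
          rw [Real.dist_eq, abs_of_nonpos (by linarith)]
          have : T - ε / 2 ≤ s := le_max_right _ _
          linarith
        exact absurd (hball hdist) (not_lt.2 (hbefore s hs0 hsT))
    -- continuity: M < π/2 slightly beyond T
    have hev2 := (hMcont T hT0).eventually (eventually_lt_nhds (lt_of_le_of_lt hMT hγ))
    obtain ⟨ε, hε, hball⟩ := Metric.eventually_nhds_iff.1 hev2
    set δ := ε / 2 with hδdef
    have hδ : 0 < δ := by positivity
    have hsmall : ∀ x ∈ Set.Icc T (T + δ), M x < Real.pi / 2 := by
      intro x hxm
      apply hball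
      rw [Real.dist_eq, abs_of_nonneg (by linarith [hxm.1])]
      linarith [hxm.2]
    have key : ∀ x ∈ Set.Icc T (T + δ), M x ≤ γ := by
      apply image_le_of_liminf_slope_right_le_deriv_boundary
        (f := M) (B := fun _ => γ) (B' := fun _ => 0)
      · exact fun y hy => (hMcont y (le_trans hT0 hy.1)).continuousWithinAt
      · exact hMT
      · exact continuousOn_const
      · exact fun y _ => (hasDerivAt_const y γ).hasDerivWithinAt
      · intro y hy r hr
        exact hslope y (le_trans hT0 hy.1) (hsmall y ⟨hy.1, hy.2.le⟩) r hr
    have hall : ∀ s ∈ S, T + δ ≤ s := by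
      intro s hs
      by_contra hlt
      push_neg at hlt
      rcases lt_or_ge s T with h1 | h1
      · exact absurd (hbefore s hs.1 h1) (not_le.2 hs.2)
      · exact absurd (key s ⟨h1, hlt.le⟩) (not_le.2 hs.2)
    have : T + δ ≤ T := le_csInf hSne hall
    linarith
  have hco : ∀ x : ℝ, 0 ≤ x → ∀ i j : Fin N, |θ x i - θ x j| ≤ γ := by
    intro x hx i j
    rw [abs_le]
    constructor
    · have h1 : θ x j - θ x i ≤ M x :=
        Finset.le_sup' (f := fun p : Fin N × Fin N => θ x p.1 - θ x p.2) (Finset.mem_univ (j, i))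
      have := hMle x hx
      linarith
    · have h1 : θ x i - θ x j ≤ M x :=
        Finset.le_sup' (f := fun p : Fin N × Fin N => θ x p.1 - θ x p.2) (Finset.mem_univ (i, j))
      have := hMle x hx
      linarith
  -- the Lyapunov function
  set u : ℝ → ℝ := fun s => ∑ i : Fin N, (θ s i) ^ 2 with hudef
  have hupos : ∀ x : ℝ, 0 ≤ u x := by
    intro x
    exact Finset.sum_nonneg (fun i _ => sq_nonneg _)
  set D : ℝ → ℝ := fun x => ∑ i : Fin N,
      (2 * θ x i * ((K / N) * ∑ j : Fin N, a x i j * Real.sin (θ x j - θ x i))) with hDdef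
  have huder : ∀ x : ℝ, 0 ≤ x → HasDerivAt u (D x) x := by
    intro x hx
    have h1 : HasDerivAt u (∑ i : Fin N,
        (2 * θ x i ^ 1 * ((K / N) * ∑ j : Fin N, a x i j * Real.sin (θ x j - θ x i)))) x :=
      HasDerivAt.fun_sum (fun i _ => by
        have := (hode x hx i).fun_pow 2
        simpa using this)
    simpa using h1
  have hDle : ∀ x : ℝ, 0 ≤ x → D x ≤ -lam * (c x * u x) := by
    intro x hx
    set P : ℝ := ∑ i : Fin N, ∑ j : Fin N,
      a x i j * ((θ x j - θ x i) * Real.sin (θ x j - θ x i)) with hPdef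
    have hDP : D x = -(K / N) * P := by
      have h1 : D x = (K / N) * ∑ i : Fin N, ∑ j : Fin N,
          (2 * θ x i) * (a x i j * Real.sin (θ x j - θ x i)) := by
        rw [hDdef, Finset.mul_sum]
        apply Finset.sum_congr rfl
        intro i _
        rw [Finset.mul_sum, Finset.mul_sum, Finset.mul_sum]
        apply Finset.sum_congr rfl
        intro j _
        ring
      have h2 : ∑ i : Fin N, ∑ j : Fin N,
          (a x i j * (θ x i + θ x j) * Real.sin (θ x j - θ x i)) = 0 := by
        apply sum_antisymm
        intro i j
        rw [hsym x hx j i, show θ x i - θ x j = -(θ x j - θ x i) by ring, Real.sin_neg]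
        ring
      have h3 : ∑ i : Fin N, ∑ j : Fin N,
          (2 * θ x i) * (a x i j * Real.sin (θ x j - θ x i))
          = (∑ i : Fin N, ∑ j : Fin N,
              (a x i j * (θ x i + θ x j) * Real.sin (θ x j - θ x i))) - P := by
        rw [hPdef, ← Finset.sum_sub_distrib]
        apply Finset.sum_congr rfl
        intro i _
        rw [← Finset.sum_sub_distrib]
        apply Finset.sum_congr rfl
        intro j _
        ring
      rw [h1, h3, h2]
      ring
    have hPge : Real.cos γ * (c x * u x) ≤ P := by
      have hstep1 : ∑ i : Fin N, ∑ j : Fin N,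
          Real.cos γ * (a x i j * (θ x i - θ x j) ^ 2) ≤ P := by
        rw [hPdef]
        apply Finset.sum_le_sum
        intro i _
        apply Finset.sum_le_sum
        intro j _
        have habs : |θ x j - θ x i| ≤ γ := hco x hx j i
        have hms := mul_sin_ge hγ0 hγ habs
        have hsq : (θ x i - θ x j) ^ 2 = (θ x j - θ x i) ^ 2 := by ring
        rw [hsq]
        calc Real.cos γ * (a x i j * (θ x j - θ x i) ^ 2)
            = a x i j * (Real.cos γ * (θ x j - θ x i) ^ 2) := by ring
          _ ≤ a x i j * ((θ x j - θ x i) * Real.sin (θ x j - θ x i)) :=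
              mul_le_mul_of_nonneg_left hms (ha x hx i j)
      have hstep2 : c x * u x ≤ ∑ i : Fin N, ∑ j : Fin N,
          (a x i j * (θ x i - θ x j) ^ 2) := hgap x hx (θ x) (hmean x hx)
      have hfac : ∑ i : Fin N, ∑ j : Fin N,
          Real.cos γ * (a x i j * (θ x i - θ x j) ^ 2)
          = Real.cos γ * ∑ i : Fin N, ∑ j : Fin N,
          (a x i j * (θ x i - θ x j) ^ 2) := by
        rw [Finset.mul_sum]
        apply Finset.sum_congr rfl
        intro i _
        rw [Finset.mul_sum]
      rw [hfac] at hstep1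
      calc Real.cos γ * (c x * u x)
          ≤ Real.cos γ * ∑ i : Fin N, ∑ j : Fin N, (a x i j * (θ x i - θ x j) ^ 2) :=
            mul_le_mul_of_nonneg_left hstep2 hcos.le
        _ ≤ P := hstep1
    rw [hDP, hlamdef]
    have : -(K / N) * P ≤ -(K / N) * (Real.cos γ * (c x * u x)) := by
      apply neg_le_neg at hPge
      have hKN : 0 ≤ K / N := (div_pos hK hNR).le
      nlinarith
    calc -(K / N) * P ≤ -(K / N) * (Real.cos γ * (c x * u x)) := this
      _ = -(K * Real.cos γ / N) * (c x * u x) := by ring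
  -- u is nonincreasing
  have hanti : ∀ s t : ℝ, 0 ≤ s → s ≤ t → u t ≤ u s := by
    intro s t hs hst
    have h := sub_le_integral_of_hasDeriv_right_of_le (g := u) (g' := D)
      (φ := fun _ => (0:ℝ)) hst
      (fun y hy => ((huder y (le_trans hs hy.1)).continuousAt).continuousWithinAt)
      (fun y hy => (huder y (le_trans hs hy.1.le)).hasDerivWithinAt.mono
        (fun z hz => hz))
      (by simp)
      (fun y hy => by
        show D y ≤ (0:ℝ)
        have h1 := hDle y (le_trans hs hy.1.le)
        have h2 : 0 ≤ c y * u y := mul_nonneg (hc0 y (le_trans hs hy.1.le)) (hupos y)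
        nlinarith [mul_nonneg hlam.le h2])
    simpa using h
  -- the primitive of c
  set I : ℝ → ℝ := fun x => ∫ s in (0:ℝ)..x, c s with hIdef
  have hI0 : I 0 = 0 := intervalIntegral.integral_same
  have hIint : ∀ s t : ℝ, 0 ≤ s → s ≤ t → IntervalIntegrable c volume s t := by
    intro s t hs hst
    apply (hcInt t (le_trans hs hst)).mono_set
    rw [Set.uIcc_of_le hst, Set.uIcc_of_le (le_trans hs hst)]
    exact Set.Icc_subset_Icc hs le_rfl
  have hIdiff : ∀ s t : ℝ, 0 ≤ s → s ≤ t → I t - I s = ∫ y in s..t, c y := by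
    intro s t hs hst
    have := intervalIntegral.integral_add_adjacent_intervals
      (hcInt s hs) (hIint s t hs hst)
    rw [hIdef]
    simp only []
    linarith [this]
  have hImono : ∀ ⦃s t : ℝ⦄, 0 ≤ s → s ≤ t → I s ≤ I t := by
    intro s t hs hst
    have h1 : 0 ≤ ∫ y in s..t, c y :=
      intervalIntegral.integral_nonneg hst (fun y hy => hc0 y (le_trans hs hy.1))
    have := hIdiff s t hs hst
    linarith
  have hIcont : ContinuousOn I (Set.Ici 0) := by
    intro x hx
    rw [Set.mem_Ici] at hx
    have h1 : ContinuousOn I (Set.uIcc 0 (x + 1)) :=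
      intervalIntegral.continuousOn_primitive_interval'
        (hcInt (x + 1) (by linarith)) Set.left_mem_uIcc
    have h2 : Set.uIcc (0:ℝ) (x + 1) = Set.Icc 0 (x + 1) :=
      Set.uIcc_of_le (by linarith)
    rw [h2] at h1
    have h3 : Set.Icc (0:ℝ) (x + 1) ∈ nhdsWithin x (Set.Ici 0) := by
      have : Set.Icc (0:ℝ) (x + 1) = Set.Ici 0 ∩ Set.Iic (x + 1) := by
        rw [Set.Ici_inter_Iic]
      rw [this]
      exact Filter.inter_mem self_mem_nhdsWithin
        (mem_nhdsWithin_of_mem_nhds (Iic_mem_nhds (by linarith)))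
    exact (h1 x ⟨hx, by linarith⟩).mono_of_mem_nhdsWithin h3
  have hmain : ∀ s t : ℝ, 0 ≤ s → s ≤ t → u t * (1 + lam * (I t - I s)) ≤ u s := by
    intro s t hs hst
    have hccint : IntegrableOn c (Set.Icc s t) volume := by
      have h2 := hIint s t hs hst
      rwa [intervalIntegrable_iff_integrableOn_Icc_of_le hst] at h2
    have hint : IntegrableOn (fun x => -(lam * u t) * c x) (Set.Icc s t) volume :=
      hccint.const_mul _
    have h := sub_le_integral_of_hasDeriv_right_of_le (g := u) (g' := D)
      (φ := fun x => -(lam * u t) * c x) hst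
      (fun y hy => ((huder y (le_trans hs hy.1)).continuousAt).continuousWithinAt)
      (fun y hy => (huder y (le_trans hs hy.1.le)).hasDerivWithinAt.mono
        (fun z hz => hz))
      hint
      (fun y hy => by
        show D y ≤ -(lam * u t) * c y
        have h1 := hDle y (le_trans hs hy.1.le)
        have h2 : u t ≤ u y := hanti y t (le_trans hs hy.1.le) hy.2.le
        have h3 : 0 ≤ c y := hc0 y (le_trans hs hy.1.le)
        nlinarith [mul_nonneg (mul_nonneg hlam.le h3) (sub_nonneg.2 h2)])
    have h4 : (∫ y in s..t, -(lam * u t) * c y) = -(lam * u t) * (I t - I s) := by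
      rw [intervalIntegral.integral_const_mul, ← hIdiff s t hs hst]
    rw [h4] at h
    nlinarith [h]
  intro t ht
  exact gronwall_aux hlam hI0 hImono hIcont (fun x _ => hupos x) hmain t ht
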